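/- Let R be an associative ring whose characteristic divides n, and let r be an invertible element of R. Then for every natural number i, the element r^(n^(2i+1)) − 1 is divisible by (r−1)^i, i.e., r^(n^(2i+1)) − 1 ∈ (r−1)^i · R. -/
import Mathlib

open Finset in
private lemma aux1 {S : Type*} [CommRing S] (n : ℕ) (hchar : (n : S) = 0)
    (s : S) : ∀ i : ℕ, (s - 1) ^ i ∣ s ^ (n ^ i) - 1 := by
  intro i
  induction i with
  | zero => simp
  | succ i ih =>
    have key : s ^ (n ^ (i + 1)) - 1 = (∑ k ∈ range n, (s ^ (n ^ i)) ^ k) * (s ^ (n ^ i) - 1) := by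
      rw [geom_sum_mul, ← pow_mul, pow_succ, Nat.mul_comm]
    have h2 : (s ^ (n ^ i) - 1) ∣ ∑ k ∈ range n, (s ^ (n ^ i)) ^ k := by
      have : ∑ k ∈ range n, (s ^ (n ^ i)) ^ k
          = (∑ k ∈ range n, ((s ^ (n ^ i)) ^ k - 1)) + (n : S) := by
        simp [Finset.sum_sub_distrib]
      rw [this, hchar, add_zero]
      exact Finset.dvd_sum fun k _ => by simpa using sub_dvd_pow_sub_pow (s ^ (n ^ i)) 1 k
    have h3 : (s - 1) ∣ s ^ (n ^ i) - 1 := by simpa using sub_dvd_pow_sub_pow s 1 (n ^ i)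
    calc (s - 1) ^ (i + 1) = (s - 1) ^ i * (s - 1) := by ring
      _ ∣ (s ^ (n ^ i) - 1) * (s ^ (n ^ i) - 1) := mul_dvd_mul ih h3
      _ ∣ (∑ k ∈ range n, (s ^ (n ^ i)) ^ k) * (s ^ (n ^ i) - 1) := mul_dvd_mul_right h2 _
      _ = s ^ (n ^ (i + 1)) - 1 := key.symm

private lemma aux2 {S : Type*} [CommRing S] (n : ℕ) (hchar : (n : S) = 0)
    (s : S) (i : ℕ) : (s - 1) ^ i ∣ s ^ (n ^ (2 * i + 1)) - 1 := by
  refine (aux1 n hchar s i).trans ?_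
  obtain ⟨m, hm⟩ : n ^ i ∣ n ^ (2 * i + 1) := pow_dvd_pow n (by omega)
  have := sub_dvd_pow_sub_pow (s ^ (n ^ i)) 1 m
  simpa [hm, pow_mul] using this

/-- Let `R` be an associative ring whose characteristic divides `n`
(i.e. `n·1 = 0` in `R`), and let `r` be an invertible element of `R`. Then for every
natural number `i`, the element `r^(n^(2i+1)) − 1` is divisible by `(r−1)^i`. -/
theorem stmt2 (R : Type*) [Ring R] (n : ℕ) (hchar : (n : R) = 0)
    (r : R) (hr : IsUnit r) (i : ℕ) :
    (r - 1) ^ i ∣ r ^ (n ^ (2 * i + 1)) - 1 := by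
  set S := Subring.closure ({r} : Set R) with hS
  letI : CommRing S := Subring.closureCommRingOfComm (by rintro x rfl y rfl; rfl)
  set s : S := ⟨r, Subring.subset_closure rfl⟩ with hs
  have hcharS : (n : S) = 0 := by
    apply Subtype.ext
    simpa using hchar
  have h := aux2 n hcharS s i
  have := map_dvd S.subtype h
  simpa using this
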